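/- Let b₁, …, bₙ be a basis of ℝⁿ (n points that linearly span ℝⁿ), let β = (1/n)·(b₁ + ⋯ + bₙ) be their barycenter, let Π be the zonotope generated by b₁, …, bₙ, and let P be the zonotope generated by the n+1 vectors β, b₁ − β, …, bₙ − β. Then the Lebesgue volume of Π equals the Lebesgue volume of P. -/

import Mathlib

open MeasureTheory

/-- The zonotope generated by a finite family of vectors `v : Fin k → ℝⁿ`:
the Minkowski sum of the segments from `0` to each `v i`. -/
def zonotopeFam {n k : ℕ} (v : Fin k → (Fin n → ℝ)) : Set (Fin n → ℝ) :=
  {y | ∃ t : Fin k → ℝ, (∀ i, t i ∈ Set.Icc (0 : ℝ) 1) ∧ y = ∑ i, t i • v i}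

namespace Stmt14Aux

lemma zono_image {n k : ℕ} (v : Fin k → (Fin n → ℝ)) (f : (Fin n → ℝ) →ₗ[ℝ] (Fin n → ℝ)) :
    zonotopeFam (fun i => f (v i)) = f '' zonotopeFam v := by
  ext y
  constructor
  · rintro ⟨t, ht, rfl⟩
    exact ⟨∑ i, t i • v i, ⟨t, ht, rfl⟩, by simp [map_sum, _root_.map_smul]⟩
  · rintro ⟨x, ⟨t, ht, rfl⟩, rfl⟩
    exact ⟨t, ht, by simp [map_sum, _root_.map_smul]⟩

lemma zono_std (n : ℕ) :
    zonotopeFam (fun i : Fin n => (Pi.single i 1 : Fin n → ℝ)) =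
      Set.univ.pi (fun _ : Fin n => Set.Icc (0:ℝ) 1) := by
  ext x
  constructor
  · rintro ⟨t, ht, rfl⟩
    intro k _
    have : (∑ i, t i • (Pi.single i 1 : Fin n → ℝ)) k = t k := by
      simp [Finset.sum_apply, Pi.single_apply]
    rw [this]
    exact ht k
  · intro hx
    refine ⟨x, fun i => hx i (Set.mem_univ _), ?_⟩
    funext k
    simp [Finset.sum_apply, Pi.single_apply]

lemma vol_cube (n : ℕ) :
    volume (Set.univ.pi (fun _ : Fin n => Set.Icc (0:ℝ) 1)) = 1 := by
  rw [MeasureTheory.volume_pi_pi]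
  simp

/-- Matrix with row `j` all ones, and row `i ≠ j` equal to `eᵢ − eⱼ`. -/
def Mmat (n : ℕ) (j : Fin n) : Matrix (Fin n) (Fin n) ℝ :=
  Matrix.of fun i k =>
    if i = j then 1 else (if k = i then 1 else 0) - (if k = j then 1 else 0)

def Amat (n : ℕ) (j : Fin n) : Matrix (Fin n) (Fin 2) ℝ :=
  Matrix.of fun i c => if c = 0 then (if i = j then (1:ℝ) else 0) else (if i = j then 0 else -1)

def Bmat (n : ℕ) (j : Fin n) : Matrix (Fin 2) (Fin n) ℝ :=
  Matrix.of fun c k => if c = 0 then (if k = j then (0:ℝ) else 1) else (if k = j then 1 else 0)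

lemma Mmat_det (n : ℕ) (j : Fin n) : (Mmat n j).det = n := by
  classical
  have hA : Mmat n j = 1 + Amat n j * Bmat n j := by
    ext i k
    simp only [Matrix.add_apply, Matrix.mul_apply, Fin.sum_univ_two, Matrix.of_apply,
      Matrix.one_apply, Mmat, Amat, Bmat]
    by_cases hij : i = j <;> by_cases hkj : k = j <;> by_cases hik : i = k <;>
      simp [hij, hkj, hik] <;> try omega
  have e00 : ((1 + Bmat n j * Amat n j : Matrix (Fin 2) (Fin 2) ℝ)) 0 0 = 1 := by
    simp only [Matrix.add_apply, Matrix.mul_apply, Matrix.one_apply]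
    rw [Finset.sum_eq_zero (fun x _ => ?_)]
    · norm_num
    · simp only [Bmat, Amat, Matrix.of_apply]; split_ifs <;> simp_all
  have e11 : ((1 + Bmat n j * Amat n j : Matrix (Fin 2) (Fin 2) ℝ)) 1 1 = 1 := by
    simp only [Matrix.add_apply, Matrix.mul_apply, Matrix.one_apply]
    rw [Finset.sum_eq_zero (fun x _ => ?_)]
    · norm_num
    · simp only [Bmat, Amat, Matrix.of_apply]; split_ifs <;> simp_all
  have e10 : ((1 + Bmat n j * Amat n j : Matrix (Fin 2) (Fin 2) ℝ)) 1 0 = 1 := by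
    simp only [Matrix.add_apply, Matrix.mul_apply, Matrix.one_apply]
    rw [Finset.sum_congr rfl (fun x _ =>
      show Bmat n j 1 x * Amat n j x 0 = if x = j then (1:ℝ) else 0 by
        simp only [Bmat, Amat, Matrix.of_apply]; split_ifs <;> simp_all)]
    simp [Finset.sum_ite_eq']
  have e01 : ((1 + Bmat n j * Amat n j : Matrix (Fin 2) (Fin 2) ℝ)) 0 1 = 1 - (n : ℝ) := by
    simp only [Matrix.add_apply, Matrix.mul_apply, Matrix.one_apply]
    rw [Finset.sum_congr rfl (fun x _ =>
      show Bmat n j 0 x * Amat n j x 1 = (if x = j then (1:ℝ) else 0) - 1 by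
        simp only [Bmat, Amat, Matrix.of_apply]; split_ifs <;> simp_all)]
    rw [Finset.sum_sub_distrib]
    simp [Finset.sum_ite_eq']
  rw [hA, Matrix.det_one_add_mul_comm, Matrix.det_fin_two, e00, e01, e10, e11]
  ring

def Zset (n : ℕ) (j : Fin n) : Set (Fin n → ℝ) :=
  {x | (∑ k, x k) ∈ Set.Icc (0:ℝ) 1 ∧ ∀ i, x i - x j ∈ Set.Icc (0:ℝ) 1}

lemma Zset_eq_preimage (n : ℕ) (j : Fin n) :
    Zset n j = (Matrix.toLin' (Mmat n j)) ⁻¹'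
      (Set.univ.pi (fun _ : Fin n => Set.Icc (0:ℝ) 1)) := by
  ext x
  have hval : ∀ i, Matrix.toLin' (Mmat n j) x i =
      if i = j then ∑ k, x k else x i - x j := by
    intro i
    by_cases hij : i = j
    · subst hij
      simp [Matrix.toLin'_apply, Matrix.mulVec, dotProduct, Mmat]
    · simp only [Matrix.toLin'_apply, Matrix.mulVec, dotProduct, Mmat, Matrix.of_apply,
        if_neg hij, sub_mul, one_mul]
      rw [Finset.sum_sub_distrib]
      simp [Finset.sum_ite_eq', hij]
  constructor
  · rintro ⟨h1, h2⟩ i _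
    rw [hval i]
    split_ifs with h
    · exact h1
    · exact h2 i
  · intro h
    constructor
    · have := h j (Set.mem_univ j); rwa [hval j, if_pos rfl] at this
    · intro i
      by_cases hij : i = j
      · subst hij; simp
      · have := h i (Set.mem_univ i); rwa [hval i, if_neg hij] at this

lemma vol_Zset (n : ℕ) (hn : 0 < n) (j : Fin n) :
    volume (Zset n j) = ENNReal.ofReal (n:ℝ)⁻¹ := by
  have hdet : LinearMap.det (Matrix.toLin' (Mmat n j)) ≠ 0 := by
    rw [LinearMap.det_toLin', Mmat_det]
    exact_mod_cast hn.ne'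
  rw [Zset_eq_preimage, Measure.addHaar_preimage_linearMap volume hdet, vol_cube, mul_one,
    LinearMap.det_toLin', Mmat_det, abs_of_nonneg (by positivity)]

noncomputable def ucoord (n : ℕ) : Fin n → ℝ := fun _ => (n:ℝ)⁻¹
noncomputable def wvec (n : ℕ) (i : Fin n) : Fin n → ℝ := Pi.single i 1 - ucoord n
noncomputable def pfam (n : ℕ) : Fin (n+1) → Fin n → ℝ := Fin.cons (ucoord n) (wvec n)

lemma coord (n : ℕ) (s : ℝ) (r : Fin n → ℝ) (k : Fin n) :
    (s • ucoord n + ∑ i : Fin n, r i • wvec n i) k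
      = s * (n:ℝ)⁻¹ + r k - (∑ i : Fin n, r i) * (n:ℝ)⁻¹ := by
  simp only [ucoord, wvec, Pi.add_apply, Pi.smul_apply, smul_eq_mul, Finset.sum_apply,
    Pi.sub_apply, Pi.single_apply, mul_sub, Finset.sum_sub_distrib, mul_ite, mul_one, mul_zero,
    Finset.sum_ite_eq', Finset.sum_ite_eq, Finset.mem_univ, if_pos]
  rw [← Finset.sum_mul]
  ring

lemma sumcoord (n : ℕ) (hn : (n:ℝ) ≠ 0) (s : ℝ) (r : Fin n → ℝ) :
    ∑ k, (s • ucoord n + ∑ i : Fin n, r i • wvec n i) k = s := by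
  rw [Finset.sum_congr rfl fun k _ => coord n s r k]
  simp only [Finset.sum_add_distrib, Finset.sum_sub_distrib, Finset.sum_const,
    Finset.card_univ, Fintype.card_fin, nsmul_eq_mul]
  field_simp
  ring

lemma zono_pfam_apply (n : ℕ) (t : Fin (n+1) → ℝ) :
    ∑ i, t i • pfam n i = t 0 • ucoord n + ∑ i : Fin n, t i.succ • wvec n i := by
  rw [Fin.sum_univ_succ]
  simp [pfam]

lemma P0_eq_union (n : ℕ) (hn : 0 < n) :
    zonotopeFam (pfam n) = ⋃ j, Zset n j := by
  have hn' : (n : ℝ) ≠ 0 := Nat.cast_ne_zero.mpr hn.ne'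
  ext x
  constructor
  · rintro ⟨t, ht, rfl⟩
    rw [zono_pfam_apply]
    set s := t 0 with hs
    set r : Fin n → ℝ := fun i => t i.succ with hr
    obtain ⟨j, -, hj⟩ := Finset.exists_min_image Finset.univ r ⟨⟨0, hn⟩, Finset.mem_univ _⟩
    refine Set.mem_iUnion.mpr ⟨j, ?_, ?_⟩
    · rw [sumcoord n hn' s r]
      exact ht 0
    · intro i
      rw [coord n s r i, coord n s r j]
      have h1 : (0:ℝ) ≤ r i - r j := sub_nonneg.mpr (hj i (Finset.mem_univ i))
      have h2 : r i - r j ≤ 1 := by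
        have := (ht i.succ).2
        have := (ht j.succ).1
        simp only [hr]
        linarith
      constructor
      · linarith
      · linarith
  · intro hx
    obtain ⟨j, hj⟩ := Set.mem_iUnion.mp hx
    obtain ⟨hsum, hdiff⟩ := hj
    refine ⟨Fin.cons (∑ k, x k) (fun i => x i - x j), ?_, ?_⟩
    · intro i
      refine Fin.cases ?_ ?_ i
      · simpa using hsum
      · intro i'; simpa using hdiff i'
    · rw [zono_pfam_apply]
      simp only [Fin.cons_zero, Fin.cons_succ]
      funext k
      rw [coord]
      have : ∑ i : Fin n, (x i - x j) = (∑ i, x i) - n * x j := by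
        rw [Finset.sum_sub_distrib]
        simp [Finset.sum_const, Finset.card_univ, mul_comm]
      rw [this]
      field_simp
      ring

lemma hyperplane_null (n : ℕ) (j k : Fin n) (hjk : j ≠ k) :
    volume {x : Fin n → ℝ | x j = x k} = 0 := by
  set L : (Fin n → ℝ) →ₗ[ℝ] ℝ := (LinearMap.proj j : (Fin n → ℝ) →ₗ[ℝ] ℝ) - (LinearMap.proj k : (Fin n → ℝ) →ₗ[ℝ] ℝ) with hL
  have hset : {x : Fin n → ℝ | x j = x k} = (LinearMap.ker L : Set (Fin n → ℝ)) := by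
    ext x
    simp [hL, LinearMap.mem_ker, sub_eq_zero]
  rw [hset]
  apply Measure.addHaar_submodule
  intro htop
  have h1 : (Pi.single j 1 : Fin n → ℝ) ∈ LinearMap.ker L := by
    rw [htop]; trivial
  rw [LinearMap.mem_ker, hL] at h1
  simp [LinearMap.proj, Pi.single_apply, hjk.symm] at h1

lemma vol_P0 (n : ℕ) (hn : 0 < n) : volume (zonotopeFam (pfam n)) = 1 := by
  have hn' : (n : ℝ) ≠ 0 := Nat.cast_ne_zero.mpr hn.ne'
  rw [P0_eq_union n hn]
  have hmeas : ∀ j, NullMeasurableSet (Zset n j) volume := by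
    intro j
    rw [Zset_eq_preimage]
    exact (((Matrix.toLin' (Mmat n j)).continuous_of_finiteDimensional).measurable
      (MeasurableSet.univ_pi fun _ => measurableSet_Icc)).nullMeasurableSet
  have hdisj : Pairwise (Function.onFun (AEDisjoint volume) (Zset n)) := by
    intro j k hjk
    refine measure_mono_null ?_ (hyperplane_null n j k hjk)
    rintro x ⟨⟨-, hxj⟩, ⟨-, hxk⟩⟩
    have h1 := (hxj k).1
    have h2 := (hxk j).1
    simp only [Set.mem_setOf_eq]
    linarith
  rw [measure_iUnion₀ hdisj hmeas, tsum_fintype]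
  rw [Finset.sum_congr rfl fun j _ => vol_Zset n hn j]
  rw [Finset.sum_const, Finset.card_univ, Fintype.card_fin, nsmul_eq_mul]
  rw [← ENNReal.ofReal_natCast n, ← ENNReal.ofReal_mul (by positivity)]
  rw [mul_inv_cancel₀ hn']
  simp

end Stmt14Aux

open Stmt14Aux in
/-- If `b₁, …, bₙ` linearly span `ℝⁿ` with barycenter `β`, then the zonotope
`Π` generated by `b₁, …, bₙ` and the zonotope `P` generated by the `n+1`
vectors `β, b₁ − β, …, bₙ − β` have the same Lebesgue volume. -/
theorem stmt14 (n : ℕ) (b : Fin n → (Fin n → ℝ))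
    (hb : Submodule.span ℝ (Set.range b) = ⊤)
    (β : Fin n → ℝ) (hβ : β = (n : ℝ)⁻¹ • ∑ i, b i) :
    volume (zonotopeFam b) =
      volume (zonotopeFam (Fin.cons β (fun i => b i - β) : Fin (n + 1) → (Fin n → ℝ))) := by
  rcases Nat.eq_zero_or_pos n with hn | hn
  · subst hn
    congr 1
    ext y
    constructor
    · rintro -
      exact ⟨fun _ => 0, fun i => ⟨le_refl 0, zero_le_one⟩, Subsingleton.elim _ _⟩
    · rintro -
      exact ⟨fun _ => 0, fun i => ⟨le_refl 0, zero_le_one⟩, Subsingleton.elim _ _⟩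
  · have hn' : (n : ℝ) ≠ 0 := Nat.cast_ne_zero.mpr hn.ne'
    set B : (Fin n → ℝ) →ₗ[ℝ] (Fin n → ℝ) := Matrix.toLin' (Matrix.of fun i k => b k i) with hB
    have hsingle : ∀ i, B (Pi.single i 1) = b i := by
      intro i
      funext j
      simp [hB, Matrix.toLin'_apply, Matrix.mulVec, dotProduct, Pi.single_apply,
        Finset.sum_ite_eq', mul_ite]
    have hu : B (ucoord n) = β := by
      have hu' : ucoord n = (n:ℝ)⁻¹ • ∑ i, (Pi.single i 1 : Fin n → ℝ) := by
        funext k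
        simp [ucoord, Finset.sum_apply, Pi.single_apply, Finset.sum_ite_eq]
      rw [hu', _root_.map_smul, map_sum, hβ]
      congr 1
      exact Finset.sum_congr rfl fun i _ => hsingle i
    have h1 : b = fun i => B ((fun i : Fin n => (Pi.single i 1 : Fin n → ℝ)) i) := by
      funext i; exact (hsingle i).symm
    have h2 : (Fin.cons β (fun i => b i - β) : Fin (n + 1) → (Fin n → ℝ))
        = fun i => B (pfam n i) := by
      funext i
      refine Fin.cases ?_ ?_ i
      · simp [pfam, hu]
      · intro i'
        simp only [Fin.cons_succ, pfam, wvec, map_sub]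
        rw [hsingle i', hu]
    rw [h2, zono_image, Measure.addHaar_image_linearMap, vol_P0 n hn]
    conv_lhs => rw [h1]
    rw [zono_image, Measure.addHaar_image_linearMap, zono_std, vol_cube]
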